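/- Let γ > 0 and φ̃ > 0, and let y* be the unique y ≥ −1 with y·e^y = (φ̃·γ − 1)/e. Then y* > −1, the number P* = (e^{1+y*} − 1)/γ is strictly positive, and P* satisfies log(1+P*·γ) = 1 + (φ̃·γ − 1)/(1+P*·γ); moreover P* is the unique positive solution of this equation. -/

import Mathlib

theorem lambert_closed_form
    (γ φ ystar : ℝ) (hγ : 0 < γ) (hφ : 0 < φ)
    (hystar : -1 ≤ ystar ∧ ystar * Real.exp ystar = (φ * γ - 1) / Real.exp 1)
    (hunique : ∀ y : ℝ, -1 ≤ y → y * Real.exp y = (φ * γ - 1) / Real.exp 1 →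
      y = ystar) :
    -1 < ystar ∧
      0 < (Real.exp (1 + ystar) - 1) / γ ∧
      (Real.log (1 + (Real.exp (1 + ystar) - 1) / γ * γ) =
        1 + (φ * γ - 1) / (1 + (Real.exp (1 + ystar) - 1) / γ * γ)) ∧
      ∀ P : ℝ, 0 < P →
        Real.log (1 + P * γ) = 1 + (φ * γ - 1) / (1 + P * γ) →
        P = (Real.exp (1 + ystar) - 1) / γ := by
  obtain ⟨hge, heq⟩ := hystar
  have he : (0:ℝ) < Real.exp 1 := Real.exp_pos 1
  have hy1 : -1 < ystar := by
    rcases lt_or_eq_of_le hge with h | h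
    · exact h
    · exfalso
      rw [← h] at heq
      have : (-1 : ℝ) * Real.exp (-1) = -(1 / Real.exp 1) := by
        rw [Real.exp_neg]; ring
      rw [this] at heq
      have : -(1:ℝ) = φ * γ - 1 := by
        field_simp at heq
        linarith [heq]
      nlinarith [mul_pos hφ hγ]
  have hPγ : 1 + (Real.exp (1 + ystar) - 1) / γ * γ = Real.exp (1 + ystar) := by
    field_simp
    ring
  have hexp1 : 1 < Real.exp (1 + ystar) := by
    have : (0:ℝ) < 1 + ystar := by linarith
    calc (1:ℝ) = Real.exp 0 := (Real.exp_zero).symm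
      _ < Real.exp (1 + ystar) := Real.exp_lt_exp.mpr this
  have hP : 0 < (Real.exp (1 + ystar) - 1) / γ := by
    apply div_pos (by linarith) hγ
  have key : ystar * Real.exp (1 + ystar) = φ * γ - 1 := by
    have := heq
    rw [Real.exp_add]
    field_simp at this ⊢
    nlinarith [this]
  refine ⟨hy1, hP, ?_, ?_⟩
  · rw [hPγ, Real.log_exp]
    have hne : Real.exp (1 + ystar) ≠ 0 := (Real.exp_pos _).ne'
    field_simp
    linarith [key]
  · intro P hPpos heqP
    set y := Real.log (1 + P * γ) - 1 with hy
    have h1 : 0 < 1 + P * γ := by nlinarith [mul_pos hPpos hγ]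
    have h2 : 1 + P * γ = Real.exp (1 + y) := by
      rw [hy]; simp [Real.exp_log h1]
    have hy_gt : -1 < y := by
      have : 0 < Real.log (1 + P * γ) := by
        apply Real.log_pos; nlinarith [mul_pos hPpos hγ]
      simp [hy]; linarith
    have hysol : y * Real.exp y = (φ * γ - 1) / Real.exp 1 := by
      have hE : Real.exp (1 + y) ≠ 0 := (Real.exp_pos _).ne'
      have : y * Real.exp (1 + y) = φ * γ - 1 := by
        have := heqP
        rw [h2] at this
        rw [Real.log_exp] at this
        have : y = (φ * γ - 1) / Real.exp (1 + y) := by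
          rw [hy] at this ⊢; rw [← h2] at *; linarith
        field_simp at this
        linarith [this]
      rw [Real.exp_add] at this
      field_simp
      linarith [this]
    have := hunique y (le_of_lt hy_gt) hysol
    have hPeq : P = (Real.exp (1 + y) - 1) / γ := by
      field_simp
      linarith [h2]
    rw [hPeq, this]
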